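/- arXiv:1501.06397 — 11 statements merged into one kernel-verified Lean document; each statement's English description precedes it below -/
import Mathlib

section
/- The Bayer–Macrì vector is Mukai-perpendicular to the Mukai vector: for every Chern character ch ∈ ℝ × V × ℝ and all ω, β ∈ V, the vector w_{ω,β}(ch) := (Im Z_{ω,β}(ch))·℧_Z^re − (Re Z_{ω,β}(ch))·℧_Z^im ∈ ℝ × V × ℝ satisfies ⟨w_{ω,β}(ch), v(ch)⟩ = 0. -/
noncomputable section

variable {V : Type*} [AddCommGroup V] [Module ℝ V]

/-- The Mukai pairing on `ℝ × V × ℝ`. -/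
def mukaiPair (B : V →ₗ[ℝ] V →ₗ[ℝ] ℝ) (K : V) (w v : ℝ × V × ℝ) : ℝ :=
  B w.2.1 v.2.1 - w.1 * (v.2.2 - (1/2) * B v.2.1 K)
    - v.1 * (w.2.2 + (1/2) * B w.2.1 K) - (1/8) * w.1 * v.1 * B K K

/-- The Mukai vector of a Chern character. -/
def mukaiVec (B : V →ₗ[ℝ] V →ₗ[ℝ] ℝ) (K : V) (χ : ℝ) (ch : ℝ × V × ℝ) : ℝ × V × ℝ :=
  (ch.1, ch.2.1 - ((1/4 : ℝ) * ch.1) • K,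
    ch.2.2 - (1/4) * B ch.2.1 K + (1/2) * ch.1 * (χ - (1/16) * B K K))

/-- Real part of the central charge `Z_{ω,β}(ch)`. -/
def ZRe (B : V →ₗ[ℝ] V →ₗ[ℝ] ℝ) (ω β : V) (ch : ℝ × V × ℝ) : ℝ :=
  -ch.2.2 + B ch.2.1 β - (ch.1 / 2) * (B β β - B ω ω)

/-- Imaginary part of the central charge `Z_{ω,β}(ch)`. -/
def ZIm (B : V →ₗ[ℝ] V →ₗ[ℝ] ℝ) (ω β : V) (ch : ℝ × V × ℝ) : ℝ :=
  B ch.2.1 ω - ch.1 * B β ω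

/-- Real part of the vector `℧_{Z_{ω,β}}`. -/
def mhoRe (B : V →ₗ[ℝ] V →ₗ[ℝ] ℝ) (K : V) (χ : ℝ) (ω β : V) : ℝ × V × ℝ :=
  (1, β - (3/4 : ℝ) • K,
    -(1/2) * B ω ω + (1/2) * B (β - (3/4 : ℝ) • K) (β - (3/4 : ℝ) • K)
      - (1/2) * (χ - (1/8) * B K K))

/-- Imaginary part of the vector `℧_{Z_{ω,β}}`. -/
def mhoIm (B : V →ₗ[ℝ] V →ₗ[ℝ] ℝ) (K : V) (ω β : V) : ℝ × V × ℝ :=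
  (0, ω, B (β - (3/4 : ℝ) • K) ω)

/-- The Bayer–Macrì vector `w_{ω,β}(ch)`. -/
def wBM (B : V →ₗ[ℝ] V →ₗ[ℝ] ℝ) (K : V) (χ : ℝ) (ω β : V) (ch : ℝ × V × ℝ) :
    ℝ × V × ℝ :=
  ZIm B ω β ch • mhoRe B K χ ω β - ZRe B ω β ch • mhoIm B K ω β

/-- the Bayer–Macrì vector is Mukai-perpendicular to the Mukai vector. -/
theorem wBM_mukai_perp
    (B : V →ₗ[ℝ] V →ₗ[ℝ] ℝ) (hB : ∀ v w : V, B v w = B w v)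
    (K : V) (χ : ℝ) (ch : ℝ × V × ℝ) (ω β : V) :
    mukaiPair B K (wBM B K χ ω β ch) (mukaiVec B K χ ch) = 0 := by
  obtain ⟨r, c, d⟩ := ch
  simp only [mukaiPair, wBM, mukaiVec, ZRe, ZIm, mhoRe, mhoIm, Prod.smul_mk,
    Prod.mk_sub_mk, smul_eq_mul, map_sub, map_smul, map_add, LinearMap.sub_apply,
    LinearMap.smul_apply, LinearMap.map_smul₂, LinearMap.sub_apply, smul_sub, smul_eq_mul,
    Prod.fst, Prod.snd]
  simp only [hB β c, hB ω c, hB K c, hB K β, hB K ω]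
  ring
end
end

section
/- Bertram's nested wall theorem in the (s,t)-model (Theorem 2.6, main equivalence): fix a frame (H,γ,u) and Chern characters ch = (x, y₁H + y₂γ + δ, z), ch' = (r, c₁H + c₂γ + δ', χ') with xc₁ − ry₁ ≠ 0. Then for all real s and t > 0, the wall condition Re Z_{tH, sH+uγ}(ch')·Im Z_{tH, sH+uγ}(ch) = Re Z_{tH, sH+uγ}(ch)·Im Z_{tH, sH+uγ}(ch') holds if and only if (s − C)² + t² = D + C², where C := (xχ' − rz + ud(xc₂ − ry₂))/(g(xc₁ − ry₁)) and D := (2zc₁ − 2c₂udy₁ − xu²dc₁ + 2y₂udc₁ − 2χ'y₁ + ru²dy₁)/(g(xc₁ − ry₁)). -/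
noncomputable section

variable {V : Type*} [AddCommGroup V] [Module ℝ V]

/-- Bertram's nested wall theorem in the `(s,t)`-model (Theorem 2.6). -/
theorem nested_wall_st_model
    (B : V →ₗ[ℝ] V →ₗ[ℝ] ℝ) (hB : ∀ v w : V, B v w = B w v)
    (H γ : V) (u g d : ℝ)
    (hg : g = B H H) (hgpos : 0 < g) (hHγ : B H γ = 0)
    (hd : d = -(B γ γ)) (hdnn : 0 ≤ d) (hu : 0 ≤ u)
    (x y₁ y₂ z r c₁ c₂ χ' : ℝ) (δ δ' : V)
    (hδH : B δ H = 0) (hδγ : B δ γ = 0) (hδ'H : B δ' H = 0) (hδ'γ : B δ' γ = 0)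
    (hden : x * c₁ - r * y₁ ≠ 0)
    (C D : ℝ)
    (hC : C = (x * χ' - r * z + u * d * (x * c₂ - r * y₂)) / (g * (x * c₁ - r * y₁)))
    (hD : D = (2*z*c₁ - 2*c₂*u*d*y₁ - x*u^2*d*c₁ + 2*y₂*u*d*c₁ - 2*χ'*y₁ + r*u^2*d*y₁)
              / (g * (x * c₁ - r * y₁))) :
    ∀ s t : ℝ, 0 < t →
      ((ZRe B (t • H) (s • H + u • γ) (r, c₁ • H + c₂ • γ + δ', χ') *
          ZIm B (t • H) (s • H + u • γ) (x, y₁ • H + y₂ • γ + δ, z) =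
        ZRe B (t • H) (s • H + u • γ) (x, y₁ • H + y₂ • γ + δ, z) *
          ZIm B (t • H) (s • H + u • γ) (r, c₁ • H + c₂ • γ + δ', χ')) ↔
        (s - C)^2 + t^2 = D + C^2) := by
  intro s t ht
  have ht' : t ≠ 0 := ht.ne'
  have hγH : B γ H = 0 := (hB γ H).trans hHγ
  have hHδ : B H δ = 0 := (hB H δ).trans hδH
  have hγδ : B γ δ = 0 := (hB γ δ).trans hδγ
  have hHδ' : B H δ' = 0 := (hB H δ').trans hδ'H
  have hγδ' : B γ δ' = 0 := (hB γ δ').trans hδ'γ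
  have hγγ : B γ γ = -d := by rw [hd]; ring
  have hHH : B H H = g := hg.symm
  have hM : g * (x * c₁ - r * y₁) ≠ 0 := mul_ne_zero hgpos.ne' hden
  simp only [ZRe, ZIm, map_add, map_smul, LinearMap.add_apply, LinearMap.smul_apply,
    smul_eq_mul, hHγ, hγH, hHδ, hγδ, hHδ', hγδ', hδH, hδγ, hδ'H, hδ'γ, hγγ, hHH]
  have hC' : g * (x * c₁ - r * y₁) * C = x * χ' - r * z + u * d * (x * c₂ - r * y₂) := by
    rw [hC]; field_simp
  have hD' : g * (x * c₁ - r * y₁) * D =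
      2*z*c₁ - 2*c₂*u*d*y₁ - x*u^2*d*c₁ + 2*y₂*u*d*c₁ - 2*χ'*y₁ + r*u^2*d*y₁ := by
    rw [hD]; field_simp
  constructor
  · intro h
    have h2 : t * (g * (g * (x * c₁ - r * y₁) * (s^2 + t^2)
        - 2*s*(x * χ' - r * z + u * d * (x * c₂ - r * y₂))
        - (2*z*c₁ - 2*c₂*u*d*y₁ - x*u^2*d*c₁ + 2*y₂*u*d*c₁ - 2*χ'*y₁ + r*u^2*d*y₁))) = 0 := by
      linear_combination (-2) * h
    have h3 := (mul_eq_zero.mp ((mul_eq_zero.mp h2).resolve_left ht')).resolve_left hgpos.ne'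
    have h4 : g * (x * c₁ - r * y₁) * ((s - C)^2 + t^2 - (D + C^2)) = 0 := by
      linear_combination h3 - 2*s*hC' - hD'
    have h5 := (mul_eq_zero.mp h4).resolve_left hM
    linarith
  · intro h
    have h4 : g * (x * c₁ - r * y₁) * (s^2 + t^2)
        - 2*s*(x * χ' - r * z + u * d * (x * c₂ - r * y₂))
        - (2*z*c₁ - 2*c₂*u*d*y₁ - x*u^2*d*c₁ + 2*y₂*u*d*c₁ - 2*χ'*y₁ + r*u^2*d*y₁) = 0 := by
      linear_combination g * (x * c₁ - r * y₁) * h + 2*s*hC' + hD'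
    linear_combination (-(t*g)/2) * h4
end
end

section
/- Theorem 2.6, case ch₀ ≠ 0: in a frame (H,γ,u) with ch = (x, y₁H + y₂γ + δ, z), ch' = (r, c₁H + c₂γ + δ', χ'), x ≠ 0 and xc₁ − ry₁ ≠ 0, the quantities C and D satisfy D = −(2y₁/x)·C + (ud(2y₂ − ux) + 2z)/(gx) = −(2y₁/x)·C + (y₁²/x² − F), where F := (d/g)(u − y₂/x)² + (1/(x²g))(y₁²g − y₂²d − 2xz). Moreover, if B(δ,δ) ≤ 0 (Hodge index) and ch is of Bogomolov type, i.e. B(ch₁,ch₁) − 2xz ≥ 0 where ch₁ = y₁H + y₂γ + δ, then F ≥ 0 (for every u ≥ 0). -/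
noncomputable section

variable {V : Type*} [AddCommGroup V] [Module ℝ V]

/-- Theorem 2.6, case `ch₀ ≠ 0`. -/
theorem nested_wall_rank_nonzero
    (B : V →ₗ[ℝ] V →ₗ[ℝ] ℝ) (hB : ∀ v w : V, B v w = B w v)
    (H γ : V) (u g d : ℝ)
    (hg : g = B H H) (hgpos : 0 < g) (hHγ : B H γ = 0)
    (hd : d = -(B γ γ)) (hdnn : 0 ≤ d) (hu : 0 ≤ u)
    (x y₁ y₂ z r c₁ c₂ χ' : ℝ) (δ δ' : V)
    (hδH : B δ H = 0) (hδγ : B δ γ = 0) (hδ'H : B δ' H = 0) (hδ'γ : B δ' γ = 0)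
    (hx : x ≠ 0) (hden : x * c₁ - r * y₁ ≠ 0)
    (C D F : ℝ)
    (hC : C = (x * χ' - r * z + u * d * (x * c₂ - r * y₂)) / (g * (x * c₁ - r * y₁)))
    (hD : D = (2*z*c₁ - 2*c₂*u*d*y₁ - x*u^2*d*c₁ + 2*y₂*u*d*c₁ - 2*χ'*y₁ + r*u^2*d*y₁)
              / (g * (x * c₁ - r * y₁)))
    (hF : F = (d/g) * (u - y₂/x)^2 + (1/(x^2*g)) * (y₁^2*g - y₂^2*d - 2*x*z)) :
    D = -(2*y₁/x) * C + (u*d*(2*y₂ - u*x) + 2*z) / (g*x) ∧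
    D = -(2*y₁/x) * C + (y₁^2/x^2 - F) ∧
    (B δ δ ≤ 0 →
      0 ≤ B (y₁ • H + y₂ • γ + δ) (y₁ • H + y₂ • γ + δ) - 2*x*z →
      0 ≤ F) := by
  have hg0 : g ≠ 0 := ne_of_gt hgpos
  refine ⟨?_, ?_, ?_⟩
  · subst hC hD; generalize he : x * c₁ - r * y₁ = e at hden ⊢; field_simp; rw [← he]; ring
  · subst hC hD hF; generalize he : x * c₁ - r * y₁ = e at hden ⊢; field_simp; rw [← he]; ring
  · intro hδδ hBog
    have hexp : B (y₁ • H + y₂ • γ + δ) (y₁ • H + y₂ • γ + δ)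
        = y₁^2*g - y₂^2*d + B δ δ := by
      simp only [map_add, map_smul, LinearMap.add_apply, LinearMap.smul_apply,
        smul_eq_mul]
      have hγH : B γ H = 0 := by rw [hB γ H]; exact hHγ
      rw [hB H δ, hB γ δ, hHγ, hγH, hδH, hδγ, hg, hd]; ring
    rw [hexp] at hBog
    have h1 : 0 ≤ y₁^2*g - y₂^2*d - 2*x*z := by linarith
    rw [hF]
    have h2 : (0:ℝ) ≤ (d/g) * (u - y₂/x)^2 := by positivity
    have h3 : (0:ℝ) ≤ (1/(x^2*g)) * (y₁^2*g - y₂^2*d - 2*x*z) := by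
      apply mul_nonneg _ h1
      positivity
    linarith
end
end

section
/- Theorem 2.6, case ch₀ = 0: in a frame (H,γ,u) with ch = (0, y₁H + y₂γ + δ, z), y₁ > 0, and ch' = (r, c₁H + c₂γ + δ', χ') with r ≠ 0, the center C = (z + duy₂)/(gy₁) is independent of ch', and D satisfies D = −(2c₁/r)·C + (ud(2c₂ − ur) + 2χ')/(gr) = −(2c₁/r)·C + (c₁²/r² − F'), where F' := (d/g)(u − c₂/r)² + (1/(r²g))(c₁²g − c₂²d − 2rχ'). Moreover, if B(δ',δ') ≤ 0 (Hodge index) and ch' is of Bogomolov type, i.e. B(ch'₁,ch'₁) − 2rχ' ≥ 0 where ch'₁ = c₁H + c₂γ + δ', then F' ≥ 0 (for every u ≥ 0). -/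
noncomputable section

variable {V : Type*} [AddCommGroup V] [Module ℝ V]

/-- Theorem 2.6, case `ch₀ = 0`. -/
theorem nested_wall_rank_zero
    (B : V →ₗ[ℝ] V →ₗ[ℝ] ℝ) (hB : ∀ v w : V, B v w = B w v)
    (H γ : V) (u g d : ℝ)
    (hg : g = B H H) (hgpos : 0 < g) (hHγ : B H γ = 0)
    (hd : d = -(B γ γ)) (hdnn : 0 ≤ d) (hu : 0 ≤ u)
    (y₁ y₂ z r c₁ c₂ χ' : ℝ) (δ δ' : V)
    (hδH : B δ H = 0) (hδγ : B δ γ = 0) (hδ'H : B δ' H = 0) (hδ'γ : B δ' γ = 0)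
    (hy₁ : 0 < y₁) (hr : r ≠ 0)
    (C D F' : ℝ)
    (hC : C = (z + d*u*y₂) / (g*y₁))
    (hD : D = (2*z*c₁ - 2*c₂*u*d*y₁ + 2*y₂*u*d*c₁ - 2*χ'*y₁ + r*u^2*d*y₁)
              / (g * (-(r * y₁))))
    (hF' : F' = (d/g) * (u - c₂/r)^2 + (1/(r^2*g)) * (c₁^2*g - c₂^2*d - 2*r*χ')) :
    D = -(2*c₁/r) * C + (u*d*(2*c₂ - u*r) + 2*χ') / (g*r) ∧
    D = -(2*c₁/r) * C + (c₁^2/r^2 - F') ∧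
    (B δ' δ' ≤ 0 →
      0 ≤ B (c₁ • H + c₂ • γ + δ') (c₁ • H + c₂ • γ + δ') - 2*r*χ' →
      0 ≤ F') := by
  have hg0 : g ≠ 0 := ne_of_gt hgpos
  have hy0 : y₁ ≠ 0 := ne_of_gt hy₁
  refine ⟨?_, ?_, ?_⟩
  · rw [hD, hC]; field_simp; ring
  · rw [hD, hC, hF']; field_simp; ring
  · intro hδ' hBog
    have hpair : B (c₁ • H + c₂ • γ + δ') (c₁ • H + c₂ • γ + δ')
        = c₁^2*g - c₂^2*d + B δ' δ' := by
      simp only [map_add, map_smul, LinearMap.add_apply, LinearMap.smul_apply,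
        smul_eq_mul]
      rw [hB H δ', hB γ δ', hB γ H, hδ'H, hδ'γ, hHγ, hg, hd]; ring
    rw [hpair] at hBog
    have h1 : 0 ≤ c₁^2*g - c₂^2*d - 2*r*χ' := by linarith
    rw [hF']
    have h2 : 0 ≤ (d/g) * (u - c₂/r)^2 := by positivity
    have h3 : 0 ≤ (1/(r^2*g)) * (c₁^2*g - c₂^2*d - 2*r*χ') := by
      apply mul_nonneg _ h1
      positivity
    linarith
end
end

section
/- Bertram's nested wall theorem in the (s,q)-model, case ch₀ ≠ 0 (Corollary 2.9, first bullet): in a frame (H,γ,u) with ch = (x, y₁H + y₂γ + δ, z), x ≠ 0, and ch' = (r, c₁H + c₂γ + δ', χ') with xc₁ − ry₁ ≠ 0, setting q := (s² + t²)/2, the wall condition Re Z_{tH,sH+uγ}(ch')·Im Z_{tH,sH+uγ}(ch) = Re Z_{tH,sH+uγ}(ch)·Im Z_{tH,sH+uγ}(ch') (for t > 0) holds if and only if q = C·(s − y₁/x) + (1/2)(y₁²/x² − F), where F := (d/g)(u − y₂/x)² + (1/(x²g))(y₁²g − y₂²d − 2xz); in particular all potential walls in the (s,q)-plane are semi-lines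 through the fixed point (y₁/x, (1/2)(y₁²/x² − F)), which is independent of ch'. -/
noncomputable section

variable {V : Type*} [AddCommGroup V] [Module ℝ V]

/-- Bertram's nested wall theorem in the `(s,q)`-model, case `ch₀ ≠ 0`
(Corollary 2.9, first bullet). -/
theorem nested_wall_sq_model_rank_nonzero
    (B : V →ₗ[ℝ] V →ₗ[ℝ] ℝ) (hB : ∀ v w : V, B v w = B w v)
    (H γ : V) (u g d : ℝ)
    (hg : g = B H H) (hgpos : 0 < g) (hHγ : B H γ = 0)
    (hd : d = -(B γ γ)) (hdnn : 0 ≤ d) (hu : 0 ≤ u)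
    (x y₁ y₂ z r c₁ c₂ χ' : ℝ) (δ δ' : V)
    (hδH : B δ H = 0) (hδγ : B δ γ = 0) (hδ'H : B δ' H = 0) (hδ'γ : B δ' γ = 0)
    (hx : x ≠ 0) (hden : x * c₁ - r * y₁ ≠ 0)
    (C F : ℝ)
    (hC : C = (x * χ' - r * z + u * d * (x * c₂ - r * y₂)) / (g * (x * c₁ - r * y₁)))
    (hF : F = (d/g) * (u - y₂/x)^2 + (1/(x^2*g)) * (y₁^2*g - y₂^2*d - 2*x*z)) :
    ∀ s t : ℝ, 0 < t →
      ((ZRe B (t • H) (s • H + u • γ) (r, c₁ • H + c₂ • γ + δ', χ') *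
          ZIm B (t • H) (s • H + u • γ) (x, y₁ • H + y₂ • γ + δ, z) =
        ZRe B (t • H) (s • H + u • γ) (x, y₁ • H + y₂ • γ + δ, z) *
          ZIm B (t • H) (s • H + u • γ) (r, c₁ • H + c₂ • γ + δ', χ')) ↔
        (s^2 + t^2) / 2 = C * (s - y₁/x) + (1/2) * (y₁^2/x^2 - F)) := by
  intro s t ht
  have hγH : B γ H = 0 := by rw [hB]; exact hHγ
  have hHδ : B H δ = 0 := by rw [hB]; exact hδH
  have hγδ : B γ δ = 0 := by rw [hB]; exact hδγ
  have hHδ' : B H δ' = 0 := by rw [hB]; exact hδ'H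
  have hγδ' : B γ δ' = 0 := by rw [hB]; exact hδ'γ
  have hγγ : B γ γ = -d := by rw [hd]; ring
  have e1 : ZIm B (t • H) (s • H + u • γ) (x, y₁ • H + y₂ • γ + δ, z)
      = t * g * (y₁ - x * s) := by
    simp [ZIm, map_add, map_smul, hHγ, hγH, hδH, ← hg, smul_eq_mul]
    ring
  have e2 : ZIm B (t • H) (s • H + u • γ) (r, c₁ • H + c₂ • γ + δ', χ')
      = t * g * (c₁ - r * s) := by
    simp [ZIm, map_add, map_smul, hHγ, hγH, hδ'H, ← hg, smul_eq_mul]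
    ring
  have e3 : ZRe B (t • H) (s • H + u • γ) (x, y₁ • H + y₂ • γ + δ, z)
      = -z + y₁ * s * g - y₂ * u * d - x / 2 * (s ^ 2 * g - u ^ 2 * d - t ^ 2 * g) := by
    simp [ZRe, map_add, map_smul, hHγ, hγH, hδH, hδγ, hγγ, ← hg, smul_eq_mul]
    ring
  have e4 : ZRe B (t • H) (s • H + u • γ) (r, c₁ • H + c₂ • γ + δ', χ')
      = -χ' + c₁ * s * g - c₂ * u * d - r / 2 * (s ^ 2 * g - u ^ 2 * d - t ^ 2 * g) := by
    simp [ZRe, map_add, map_smul, hHγ, hγH, hδ'H, hδ'γ, hγγ, ← hg, smul_eq_mul]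
    ring
  rw [e1, e2, e3, e4, hC, hF]
  have hg0 : g ≠ 0 := ne_of_gt hgpos
  have ht0 : t ≠ 0 := ne_of_gt ht
  have hfac : (-(t * g ^ 2 * (x * c₁ - r * y₁)) : ℝ) ≠ 0 := by
    simp [ht0, hg0, hden]
  have key : (-χ' + c₁ * s * g - c₂ * u * d - r / 2 * (s ^ 2 * g - u ^ 2 * d - t ^ 2 * g))
        * (t * g * (y₁ - x * s))
      - (-z + y₁ * s * g - y₂ * u * d - x / 2 * (s ^ 2 * g - u ^ 2 * d - t ^ 2 * g))
        * (t * g * (c₁ - r * s))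
      = (-(t * g ^ 2 * (x * c₁ - r * y₁)))
        * ((s ^ 2 + t ^ 2) / 2
          - ((x * χ' - r * z + u * d * (x * c₂ - r * y₂)) / (g * (x * c₁ - r * y₁))
              * (s - y₁ / x)
            + 1 / 2 * (y₁ ^ 2 / x ^ 2
              - ((d / g) * (u - y₂ / x) ^ 2
                + 1 / (x ^ 2 * g) * (y₁ ^ 2 * g - y₂ ^ 2 * d - 2 * x * z))))) := by
    generalize hD : x * c₁ - r * y₁ = D at hden ⊢
    field_simp
    subst hD
    ring
  constructor
  · intro h
    have h0 : (-(t * g ^ 2 * (x * c₁ - r * y₁)))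
        * ((s ^ 2 + t ^ 2) / 2
          - ((x * χ' - r * z + u * d * (x * c₂ - r * y₂)) / (g * (x * c₁ - r * y₁))
              * (s - y₁ / x)
            + 1 / 2 * (y₁ ^ 2 / x ^ 2
              - ((d / g) * (u - y₂ / x) ^ 2
                + 1 / (x ^ 2 * g) * (y₁ ^ 2 * g - y₂ ^ 2 * d - 2 * x * z))))) = 0 := by
      rw [← key]; rw [h]; ring
    have := (mul_eq_zero.mp h0).resolve_left hfac
    linarith [this]
  · intro h
    have h0 : ((s ^ 2 + t ^ 2) / 2
          - ((x * χ' - r * z + u * d * (x * c₂ - r * y₂)) / (g * (x * c₁ - r * y₁))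
              * (s - y₁ / x)
            + 1 / 2 * (y₁ ^ 2 / x ^ 2
              - ((d / g) * (u - y₂ / x) ^ 2
                + 1 / (x ^ 2 * g) * (y₁ ^ 2 * g - y₂ ^ 2 * d - 2 * x * z))))) = 0 := by
      linarith [h]
    have := key
    rw [h0, mul_zero, sub_eq_zero] at this
    exact this
end
end

section
/- Bertram's nested wall theorem in the (s,q)-model, case ch₀ = 0 (Corollary 2.9, second bullet): in a frame (H,γ,u) with ch = (0, y₁H + y₂γ + δ, z), y₁ > 0, and ch' = (r, c₁H + c₂γ + δ', χ') with r ≠ 0, setting q := (s² + t²)/2 and C := (z + duy₂)/(gy₁), the wall condition Re Z_{tH,sH+uγ}(ch')·Im Z_{tH,sH+uγ}(ch) = Re Z_{tH,sH+uγ}(ch)·Im Z_{tH,sH+uγ}(ch') (for t > 0) holds if and only if q = C·(s − c₁/r) + (1/2)(c₁²/r² − F'), where F' := (d/g)(u − c₂/r)² + (1/(r²g))(c₁²g − c₂²d − 2rχ'); in particular all potential walls in the (s,q)-plane are parallel semi-lines of slope C, which is independent of ch'. -/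
noncomputable section

variable {V : Type*} [AddCommGroup V] [Module ℝ V]

/-- Bertram's nested wall theorem in the `(s,q)`-model, case `ch₀ = 0`
(Corollary 2.9, second bullet). -/
theorem nested_wall_sq_model_rank_zero
    (B : V →ₗ[ℝ] V →ₗ[ℝ] ℝ) (hB : ∀ v w : V, B v w = B w v)
    (H γ : V) (u g d : ℝ)
    (hg : g = B H H) (hgpos : 0 < g) (hHγ : B H γ = 0)
    (hd : d = -(B γ γ)) (hdnn : 0 ≤ d) (hu : 0 ≤ u)
    (y₁ y₂ z r c₁ c₂ χ' : ℝ) (δ δ' : V)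
    (hδH : B δ H = 0) (hδγ : B δ γ = 0) (hδ'H : B δ' H = 0) (hδ'γ : B δ' γ = 0)
    (hy₁ : 0 < y₁) (hr : r ≠ 0)
    (C F' : ℝ)
    (hC : C = (z + d*u*y₂) / (g*y₁))
    (hF' : F' = (d/g) * (u - c₂/r)^2 + (1/(r^2*g)) * (c₁^2*g - c₂^2*d - 2*r*χ')) :
    ∀ s t : ℝ, 0 < t →
      ((ZRe B (t • H) (s • H + u • γ) (r, c₁ • H + c₂ • γ + δ', χ') *
          ZIm B (t • H) (s • H + u • γ) ((0 : ℝ), y₁ • H + y₂ • γ + δ, z) =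
        ZRe B (t • H) (s • H + u • γ) ((0 : ℝ), y₁ • H + y₂ • γ + δ, z) *
          ZIm B (t • H) (s • H + u • γ) (r, c₁ • H + c₂ • γ + δ', χ')) ↔
        (s^2 + t^2) / 2 = C * (s - c₁/r) + (1/2) * (c₁^2/r^2 - F')) := by
  intro s t ht
  have hgne : g ≠ 0 := ne_of_gt hgpos
  have hyne : y₁ ≠ 0 := ne_of_gt hy₁
  have htne : t ≠ 0 := ne_of_gt ht
  have hγH : B γ H = 0 := (hB γ H).trans hHγ
  have hγγ : B γ γ = -d := by rw [hd]; ring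
  have hHH : B H H = g := hg.symm
  have hk : t * g ^ 2 * r * y₁ ≠ 0 :=
    mul_ne_zero (mul_ne_zero (mul_ne_zero htne (pow_ne_zero 2 hgne)) hr) hyne
  have key : ZRe B (t • H) (s • H + u • γ) (r, c₁ • H + c₂ • γ + δ', χ') *
          ZIm B (t • H) (s • H + u • γ) ((0 : ℝ), y₁ • H + y₂ • γ + δ, z) -
        ZRe B (t • H) (s • H + u • γ) ((0 : ℝ), y₁ • H + y₂ • γ + δ, z) *
          ZIm B (t • H) (s • H + u • γ) (r, c₁ • H + c₂ • γ + δ', χ') =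
      (t * g ^ 2 * r * y₁) *
        ((s ^ 2 + t ^ 2) / 2 - (C * (s - c₁ / r) + (1 / 2) * (c₁ ^ 2 / r ^ 2 - F'))) := by
    simp only [ZRe, ZIm, map_add, map_smul, LinearMap.add_apply, LinearMap.smul_apply,
      smul_eq_mul, hδH, hδγ, hδ'H, hδ'γ, hHγ, hγH, hγγ, hHH]
    rw [hC, hF']
    field_simp
    ring
  constructor
  · intro h
    have h0 : (t * g ^ 2 * r * y₁) *
        ((s ^ 2 + t ^ 2) / 2 - (C * (s - c₁ / r) + (1 / 2) * (c₁ ^ 2 / r ^ 2 - F'))) = 0 := by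
      rw [← key, h]; ring
    have h1 := (mul_eq_zero.mp h0).resolve_left hk
    linarith
  · intro h
    have h2 : (s ^ 2 + t ^ 2) / 2 - (C * (s - c₁ / r) + (1 / 2) * (c₁ ^ 2 / r ^ 2 - F')) = 0 :=
      sub_eq_zero_of_eq h
    rw [h2, mul_zero] at key
    linarith
end
end

section
/- Relations on a potential wall (Lemma 4.2): fix a frame (H,γ,u), let ch = (x, y₁H + y₂γ + δ, z) and ch' = (r, c₁H + c₂γ + δ', χ') with xc₁ − ry₁ ≠ 0, and suppose (s,t) with t > 0 satisfies the wall equation (s − C)² + t² = D + C² and Im Z_{ω,β}(ch) ≠ 0, where ω = tH, β = sH + uγ and μ := −Re Z_{ω,β}(ch)/Im Z_{ω,β}(ch). Then (i) μ·ω + β = C·H + u·γ in V (equivalently μ·t + s = C), and (ii) B(β, μω + β) − (1/2)(B(ω,ω) + B(β,β)) = −(g/2)·D − (d/2)·u². -/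
noncomputable section

variable {V : Type*} [AddCommGroup V] [Module ℝ V]

/-- relations on a potential wall (Lemma 4.2). -/
theorem wall_relations
    (B : V →ₗ[ℝ] V →ₗ[ℝ] ℝ) (hB : ∀ v w : V, B v w = B w v)
    (H γ : V) (u g d : ℝ)
    (hg : g = B H H) (hgpos : 0 < g) (hHγ : B H γ = 0)
    (hd : d = -(B γ γ)) (hdnn : 0 ≤ d) (hu : 0 ≤ u)
    (x y₁ y₂ z r c₁ c₂ χ' : ℝ) (δ δ' : V)
    (hδH : B δ H = 0) (hδγ : B δ γ = 0) (hδ'H : B δ' H = 0) (hδ'γ : B δ' γ = 0)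
    (hden : x * c₁ - r * y₁ ≠ 0)
    (C D : ℝ)
    (hC : C = (x * χ' - r * z + u * d * (x * c₂ - r * y₂)) / (g * (x * c₁ - r * y₁)))
    (hD : D = (2*z*c₁ - 2*c₂*u*d*y₁ - x*u^2*d*c₁ + 2*y₂*u*d*c₁ - 2*χ'*y₁ + r*u^2*d*y₁)
              / (g * (x * c₁ - r * y₁)))
    (s t : ℝ) (ht : 0 < t)
    (hwall : (s - C)^2 + t^2 = D + C^2)
    (hIm : ZIm B (t • H) (s • H + u • γ) (x, y₁ • H + y₂ • γ + δ, z) ≠ 0)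
    (μ : ℝ)
    (hμ : μ = -(ZRe B (t • H) (s • H + u • γ) (x, y₁ • H + y₂ • γ + δ, z))
            / ZIm B (t • H) (s • H + u • γ) (x, y₁ • H + y₂ • γ + δ, z)) :
    μ • (t • H) + (s • H + u • γ) = C • H + u • γ ∧
    B (s • H + u • γ) (μ • (t • H) + (s • H + u • γ))
        - (1/2) * (B (t • H) (t • H) + B (s • H + u • γ) (s • H + u • γ))
      = -(g/2) * D - (d/2) * u^2 := by
  have hγH : B γ H = 0 := by rw [hB]; exact hHγ
  -- values of ZIm and ZRe
  have hImval : ZIm B (t • H) (s • H + u • γ) (x, y₁ • H + y₂ • γ + δ, z)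
      = t * (g * (y₁ - x * s)) := by
    simp [ZIm, map_add, map_smul, LinearMap.add_apply, LinearMap.smul_apply,
      smul_eq_mul, hδH, hγH, hHγ, hδγ, ← hg]
    ring
  have hReval : ZRe B (t • H) (s • H + u • γ) (x, y₁ • H + y₂ • γ + δ, z)
      = -z + (y₁ * s * g - y₂ * u * d) - (x/2) * (s^2 * g - u^2 * d - t^2 * g) := by
    simp [ZRe, map_add, map_smul, LinearMap.add_apply, LinearMap.smul_apply,
      smul_eq_mul, hδH, hγH, hHγ, hδγ, ← hg]
    have hγγ : B γ γ = -d := by rw [hd]; ring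
    rw [hγγ]; ring
  have hg0 : g ≠ 0 := ne_of_gt hgpos
  have ht0 : t ≠ 0 := ne_of_gt ht
  have hIm0 : t * (g * (y₁ - x * s)) ≠ 0 := hImval ▸ hIm
  have hq : g * (y₁ - x * s) ≠ 0 := fun h => hIm0 (by rw [h, mul_zero])
  have hq2 : y₁ - x * s ≠ 0 := fun h => hq (by rw [h, mul_zero])
  have hE : s^2 + t^2 = D + 2*C*s := by linear_combination hwall
  have hCD : g*C*y₁ + (g/2)*x*D = z + y₂*u*d - (x/2)*u^2*d := by
    rw [hC, hD]
    field_simp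
    ring
  have key : μ * t + s = C := by
    rw [hμ, hImval, hReval]
    rw [div_mul_eq_mul_div, div_add' _ _ _ hIm0, div_eq_iff hIm0]
    linear_combination (-t) * hCD - (x*g*t/2) * hE
  have h1 : μ • (t • H) + (s • H + u • γ) = (μ * t + s) • H + u • γ := by
    rw [smul_smul, add_smul]; abel
  have hfst : μ • (t • H) + (s • H + u • γ) = C • H + u • γ := by rw [h1, key]
  refine ⟨hfst, ?_⟩
  rw [hfst]
  simp [map_add, map_smul, LinearMap.add_apply, LinearMap.smul_apply,
    smul_eq_mul, hγH, hHγ, ← hg]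
  have hγγ : B γ γ = -d := by rw [hd]; ring
  rw [hγγ]
  linear_combination (-(g/2)) * hE
end
end

section
/- Decomposition of the Bayer–Macrì vector on a wall (Lemma 4.4): fix a frame (H,γ,u), let ch, ch' be as in the frame with xc₁ − ry₁ ≠ 0, and suppose (s,t) with t > 0 lies on the wall (s − C)² + t² = D + C² and Im Z_{ω,β}(ch) > 0, where ω = tH, β = sH + uγ. Then w_{ω,β}(ch) = Im Z_{ω,β}(ch) · [ ((g/2)D + (d/2)u²)·(0, 0, −1) + 𝐭 ], where 𝐭 := (1, C·H + u·γ − (3/4)K, −(3/4)B(K, C·H + u·γ) − (1/2)χ + (11/32)B(K,K)) ∈ ℝ × V × ℝ. -/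
noncomputable section

variable {V : Type*} [AddCommGroup V] [Module ℝ V]

/-- decomposition of the Bayer–Macrì vector on a wall (Lemma 4.4). -/
theorem wall_wBM_decomposition
    (B : V →ₗ[ℝ] V →ₗ[ℝ] ℝ) (hB : ∀ v w : V, B v w = B w v)
    (K : V) (χ : ℝ)
    (H γ : V) (u g d : ℝ)
    (hg : g = B H H) (hgpos : 0 < g) (hHγ : B H γ = 0)
    (hd : d = -(B γ γ)) (hdnn : 0 ≤ d) (hu : 0 ≤ u)
    (x y₁ y₂ z r c₁ c₂ χ' : ℝ) (δ δ' : V)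
    (hδH : B δ H = 0) (hδγ : B δ γ = 0) (hδ'H : B δ' H = 0) (hδ'γ : B δ' γ = 0)
    (hden : x * c₁ - r * y₁ ≠ 0)
    (C D : ℝ)
    (hC : C = (x * χ' - r * z + u * d * (x * c₂ - r * y₂)) / (g * (x * c₁ - r * y₁)))
    (hD : D = (2*z*c₁ - 2*c₂*u*d*y₁ - x*u^2*d*c₁ + 2*y₂*u*d*c₁ - 2*χ'*y₁ + r*u^2*d*y₁)
              / (g * (x * c₁ - r * y₁)))
    (s t : ℝ) (ht : 0 < t)
    (hwall : (s - C)^2 + t^2 = D + C^2)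
    (hIm : 0 < ZIm B (t • H) (s • H + u • γ) (x, y₁ • H + y₂ • γ + δ, z)) :
    wBM B K χ (t • H) (s • H + u • γ) (x, y₁ • H + y₂ • γ + δ, z)
      = ZIm B (t • H) (s • H + u • γ) (x, y₁ • H + y₂ • γ + δ, z) •
          (((g/2) * D + (d/2) * u^2) • ((0 : ℝ), (0 : V), (-1 : ℝ))
            + ((1 : ℝ), C • H + u • γ - (3/4 : ℝ) • K,
                -(3/4) * B K (C • H + u • γ) - (1/2) * χ + (11/32) * B K K)) := by
  have hgne : g ≠ 0 := ne_of_gt hgpos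
  have key : g*y₁*C = z + y₂*u*d - (x/2)*u^2*d - (x*g/2)*D := by
    have hden' : x * c₁ - y₁ * r ≠ 0 := by rw [mul_comm y₁ r]; exact hden
    rw [hC, hD]; field_simp; ring
  have hT : t^2 = D + 2*s*C - s^2 := by linear_combination hwall
  have hγH : B γ H = 0 := by rw [hB]; exact hHγ
  have hHδ : B H δ = 0 := by rw [hB]; exact hδH
  have hγδ : B γ δ = 0 := by rw [hB]; exact hδγ
  have hBHH : B H H = g := hg.symm
  have hBγγ : B γ γ = -d := by linarith [hd]
  simp only [wBM, mhoRe, mhoIm, ZRe, ZIm, Prod.smul_mk, Prod.mk_add_mk, Prod.mk_sub_mk,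
    smul_eq_mul, Prod.mk.injEq, map_add, map_smul, map_sub, LinearMap.add_apply,
    LinearMap.smul_apply, LinearMap.sub_apply, hγH, hHδ, hγδ, hBHH, hBγγ, hHγ, hδH, hδγ, hB H K, hB γ K,
    smul_sub, smul_add]
  refine ⟨by ring, ?_, ?_⟩
  · match_scalars
    · linear_combination (-(x*g/2)*t) * hT + (-t) * key
    · ring
    · ring
  · linear_combination ((-(x*g/2)*t*(g*s - (3/4)*B K H) - (g/2)*t*g*(y₁ - x*s))) * hT
      + (-t*(g*s - (3/4)*B K H)) * key
end
end

section
/- Perpendicularity of the vectors m, w, u (Lemma 4.8): let ch = (ch₀, ch₁, ch₂) with ch₀ ≠ 0, and define, for L ∈ V, m(L, ch) := (0, L, B(ch₁/ch₀ − (3/4)K, L)); w(ch) := (1, −(3/4)K, −ch₂/ch₀ − (1/2)χ + (11/32)B(K,K)); and u(ch) := w(ch) + m((1/2)K, ch) = (1, −(1/4)K, −ch₂/ch₀ + B(ch₁,K)/(2ch₀) − (1/2)χ − (1/32)B(K,K)). Then for every L ∈ V, the three vectors m(L, ch), w(ch) and u(ch) are all Mukai-perpendicular to v(ch): ⟨m(L,ch),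 v(ch)⟩ = ⟨w(ch), v(ch)⟩ = ⟨u(ch), v(ch)⟩ = 0. -/
noncomputable section

variable {V : Type*} [AddCommGroup V] [Module ℝ V]

/-- The vector `m(L, ch)` for `ch₀ ≠ 0`. -/
def mVec (B : V →ₗ[ℝ] V →ₗ[ℝ] ℝ) (K : V) (ch : ℝ × V × ℝ) (L : V) : ℝ × V × ℝ :=
  (0, L, B (ch.1⁻¹ • ch.2.1 - (3/4 : ℝ) • K) L)

/-- The vector `w(ch)` for `ch₀ ≠ 0`. -/
def wVec (B : V →ₗ[ℝ] V →ₗ[ℝ] ℝ) (K : V) (χ : ℝ) (ch : ℝ × V × ℝ) : ℝ × V × ℝ :=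
  (1, -(3/4 : ℝ) • K, -(ch.2.2 / ch.1) - (1/2) * χ + (11/32) * B K K)

/-- The vector `u(ch) = w(ch) + m((1/2)K, ch)` for `ch₀ ≠ 0`. -/
def uVec (B : V →ₗ[ℝ] V →ₗ[ℝ] ℝ) (K : V) (χ : ℝ) (ch : ℝ × V × ℝ) : ℝ × V × ℝ :=
  wVec B K χ ch + mVec B K ch ((1/2 : ℝ) • K)

/-- perpendicularity of the vectors `m`, `w`, `u` (Lemma 4.8). -/
theorem m_w_u_perpendicularity
    (B : V →ₗ[ℝ] V →ₗ[ℝ] ℝ) (hB : ∀ v w : V, B v w = B w v)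
    (K : V) (χ : ℝ) (ch : ℝ × V × ℝ) (hch₀ : ch.1 ≠ 0) :
    uVec B K χ ch
      = ((1 : ℝ), -(1/4 : ℝ) • K,
          -(ch.2.2 / ch.1) + B ch.2.1 K / (2 * ch.1) - (1/2) * χ - (1/32) * B K K) ∧
    (∀ L : V, mukaiPair B K (mVec B K ch L) (mukaiVec B K χ ch) = 0) ∧
    mukaiPair B K (wVec B K χ ch) (mukaiVec B K χ ch) = 0 ∧
    mukaiPair B K (uVec B K χ ch) (mukaiVec B K χ ch) = 0 := by
  have key : ∀ L : V, mukaiPair B K (mVec B K ch L) (mukaiVec B K χ ch) = 0 := by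
    intro L
    simp only [mukaiPair, mVec, mukaiVec, map_sub, map_smul, LinearMap.sub_apply,
      LinearMap.smul_apply, smul_eq_mul]
    rw [hB ch.2.1 L, hB K L]
    field_simp
    ring
  have hw : mukaiPair B K (wVec B K χ ch) (mukaiVec B K χ ch) = 0 := by
    simp only [mukaiPair, wVec, mukaiVec, map_sub, map_smul, map_neg, LinearMap.sub_apply,
      LinearMap.smul_apply, LinearMap.neg_apply, smul_eq_mul]
    rw [hB ch.2.1 K]
    field_simp
    ring
  refine ⟨?_, key, hw, ?_⟩
  · simp only [uVec, wVec, mVec, Prod.mk_add_mk, Prod.ext_iff, map_sub, map_smul,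
      LinearMap.sub_apply, LinearMap.smul_apply, smul_eq_mul]
    refine ⟨by ring, by module, ?_⟩
    rw [hB ch.2.1 K]
    field_simp
    ring
  · have : mukaiPair B K (uVec B K χ ch) (mukaiVec B K χ ch)
        = mukaiPair B K (wVec B K χ ch) (mukaiVec B K χ ch)
          + mukaiPair B K (mVec B K ch ((1/2:ℝ) • K)) (mukaiVec B K χ ch) := by
      simp only [uVec, mukaiPair, Prod.fst_add, Prod.snd_add, map_add, LinearMap.add_apply]
      ring
    rw [this, hw, key]; ring
end
end

section
/- Self-pairings of the vectors ℧_Z and ℧_Ẑ (Appendix B): with the ℂ-bilinear extension of the Mukai pairing, ⟨℧_Z, ℧_Z⟩ = χ − (1/4)B(K,K) and ⟨℧_Ẑ, ℧_Ẑ⟩ = −(1/8)B(K,K); explicitly, writing ℧ = R + i·I, one has ⟨R,R⟩ − ⟨I,I⟩ equal to the stated real number and ⟨R,I⟩ + ⟨I,R⟩ = 0, where for ℧_Z: R = (1, β − (3/4)K, −(1/2)B(ω,ω) + (1/2)B(β − (3/4)K, β − (3/4)K) − (1/2)(χ − (1/8)B(K,K))), I = (0, ω, B(β − (3/4)K, ω));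 and for ℧_Ẑ: R = (1, β − (1/2)K, (1/2)(B(β − (1/2)K, β − (1/2)K) − B(ω,ω))), I = (0, ω, B(β − (1/2)K, ω)). -/
noncomputable section

variable {V : Type*} [AddCommGroup V] [Module ℝ V]

/-- Real part of the vector `℧_Ẑ = e^{β - K/2 + iω}`. -/
def mhoHatRe (B : V →ₗ[ℝ] V →ₗ[ℝ] ℝ) (K : V) (ω β : V) : ℝ × V × ℝ :=
  (1, β - (1/2 : ℝ) • K,
    (1/2) * (B (β - (1/2 : ℝ) • K) (β - (1/2 : ℝ) • K) - B ω ω))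

/-- Imaginary part of the vector `℧_Ẑ`. -/
def mhoHatIm (B : V →ₗ[ℝ] V →ₗ[ℝ] ℝ) (K : V) (ω β : V) : ℝ × V × ℝ :=
  (0, ω, B (β - (1/2 : ℝ) • K) ω)

/-- self-pairings of the vectors `℧_Z` and `℧_Ẑ` (Appendix B). -/
theorem mho_self_pairings
    (B : V →ₗ[ℝ] V →ₗ[ℝ] ℝ) (hB : ∀ v w : V, B v w = B w v)
    (K : V) (χ : ℝ) (ω β : V) :
    (mukaiPair B K (mhoRe B K χ ω β) (mhoRe B K χ ω β)
        - mukaiPair B K (mhoIm B K ω β) (mhoIm B K ω β)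
      = χ - (1/4) * B K K) ∧
    (mukaiPair B K (mhoRe B K χ ω β) (mhoIm B K ω β)
        + mukaiPair B K (mhoIm B K ω β) (mhoRe B K χ ω β) = 0) ∧
    (mukaiPair B K (mhoHatRe B K ω β) (mhoHatRe B K ω β)
        - mukaiPair B K (mhoHatIm B K ω β) (mhoHatIm B K ω β)
      = -(1/8) * B K K) ∧
    (mukaiPair B K (mhoHatRe B K ω β) (mhoHatIm B K ω β)
        + mukaiPair B K (mhoHatIm B K ω β) (mhoHatRe B K ω β) = 0) := by
  simp only [mukaiPair, mhoRe, mhoIm, mhoHatRe, mhoHatIm, map_sub, map_smul,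
    LinearMap.sub_apply, LinearMap.smul_apply, smul_eq_mul]
  rw [hB ω β, hB ω K, hB K β]
  refine ⟨by ring, by ring, by ring, by ring⟩
end
end

section
/- Wall equation for the twisted central charge on a K3 surface (Appendix B, equation (B.3)): assume K = 0 and χ = 2 (the K3 case). Fix a frame (H,γ,u) and Chern characters ch = (x, y₁H + y₂γ + δ, z), ch' = (r, c₁H + c₂γ + δ', χ') with xc₁ − ry₁ ≠ 0. Then for all real s and t > 0, the twisted wall condition Re Ẑ_{tH,sH+uγ}(ch')·Im Ẑ_{tH,sH+uγ}(ch) = Re Ẑ_{tH,sH+uγ}(ch)·Im Ẑ_{tH,sH+uγ}(ch') holds if and only if (s − C)² + t² = C² + D + 2/g, where C and D are the untwisted center and constant term C := (xχ' − rz + ud(xc₂ − ry₂))/(g(xc₁ − ry₁)) and D := (2zc₁ − 2c₂udy₁ − xu²dc₁ + 2y₂udc₁ − 2χ'y₁ + ru²dy₁)/(g(xc₁ − ry₁)). -/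
noncomputable section

variable {V : Type*} [AddCommGroup V] [Module ℝ V]

/-- wall equation for the twisted central charge on a K3 surface
(Appendix B, equation (B.3)); here `K = 0` and `χ = 2`, and the twisted central
charge is the untwisted formula evaluated on the Mukai vector. -/
theorem twisted_wall_K3
    (B : V →ₗ[ℝ] V →ₗ[ℝ] ℝ) (hB : ∀ v w : V, B v w = B w v)
    (H γ : V) (u g d : ℝ)
    (hg : g = B H H) (hgpos : 0 < g) (hHγ : B H γ = 0)
    (hd : d = -(B γ γ)) (hdnn : 0 ≤ d) (hu : 0 ≤ u)
    (x y₁ y₂ z r c₁ c₂ χ' : ℝ) (δ δ' : V)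
    (hδH : B δ H = 0) (hδγ : B δ γ = 0) (hδ'H : B δ' H = 0) (hδ'γ : B δ' γ = 0)
    (hden : x * c₁ - r * y₁ ≠ 0)
    (C D : ℝ)
    (hC : C = (x * χ' - r * z + u * d * (x * c₂ - r * y₂)) / (g * (x * c₁ - r * y₁)))
    (hD : D = (2*z*c₁ - 2*c₂*u*d*y₁ - x*u^2*d*c₁ + 2*y₂*u*d*c₁ - 2*χ'*y₁ + r*u^2*d*y₁)
              / (g * (x * c₁ - r * y₁))) :
    ∀ s t : ℝ, 0 < t →
      ((ZRe B (t • H) (s • H + u • γ)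
            (mukaiVec B (0 : V) 2 (r, c₁ • H + c₂ • γ + δ', χ')) *
          ZIm B (t • H) (s • H + u • γ)
            (mukaiVec B (0 : V) 2 (x, y₁ • H + y₂ • γ + δ, z)) =
        ZRe B (t • H) (s • H + u • γ)
            (mukaiVec B (0 : V) 2 (x, y₁ • H + y₂ • γ + δ, z)) *
          ZIm B (t • H) (s • H + u • γ)
            (mukaiVec B (0 : V) 2 (r, c₁ • H + c₂ • γ + δ', χ'))) ↔
        (s - C)^2 + t^2 = C^2 + D + 2/g) := by
  intro s t ht
  have hγH : B γ H = 0 := (hB γ H).trans hHγ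
  have hHδ : B H δ = 0 := (hB H δ).trans hδH
  have hHδ' : B H δ' = 0 := (hB H δ').trans hδ'H
  have hγδ : B γ δ = 0 := (hB γ δ).trans hδγ
  have hγδ' : B γ δ' = 0 := (hB γ δ').trans hδ'γ
  have hHH : B H H = g := hg.symm
  have hγγ : B γ γ = -d := by rw [hd]; ring
  have hRe : ZRe B (t • H) (s • H + u • γ)
      (mukaiVec B (0 : V) 2 (x, y₁ • H + y₂ • γ + δ, z)) =
      -(z+x) + y₁*s*g - y₂*u*d - (x/2)*(s^2*g - u^2*d - t^2*g) := by
    simp only [ZRe, mukaiVec, map_add, map_smul, map_zero, smul_zero, sub_zero,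
      LinearMap.add_apply, LinearMap.smul_apply, LinearMap.zero_apply, LinearMap.map_smul,
      smul_eq_mul, hHH, hγγ, hHγ, hγH, hHδ, hδH, hδγ, hγδ]
    ring
  have hRe' : ZRe B (t • H) (s • H + u • γ)
      (mukaiVec B (0 : V) 2 (r, c₁ • H + c₂ • γ + δ', χ')) =
      -(χ'+r) + c₁*s*g - c₂*u*d - (r/2)*(s^2*g - u^2*d - t^2*g) := by
    simp only [ZRe, mukaiVec, map_add, map_smul, map_zero, smul_zero, sub_zero,
      LinearMap.add_apply, LinearMap.smul_apply, LinearMap.zero_apply, LinearMap.map_smul,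
      smul_eq_mul, hHH, hγγ, hHγ, hγH, hHδ', hδ'H, hδ'γ, hγδ']
    ring
  have hIm : ZIm B (t • H) (s • H + u • γ)
      (mukaiVec B (0 : V) 2 (x, y₁ • H + y₂ • γ + δ, z)) = t*g*(y₁ - x*s) := by
    simp only [ZIm, mukaiVec, map_add, map_smul, map_zero, smul_zero, sub_zero,
      LinearMap.add_apply, LinearMap.smul_apply, LinearMap.zero_apply, LinearMap.map_smul,
      smul_eq_mul, hHH, hγγ, hHγ, hγH, hHδ, hδH, hδγ, hγδ]
    ring
  have hIm' : ZIm B (t • H) (s • H + u • γ)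
      (mukaiVec B (0 : V) 2 (r, c₁ • H + c₂ • γ + δ', χ')) = t*g*(c₁ - r*s) := by
    simp only [ZIm, mukaiVec, map_add, map_smul, map_zero, smul_zero, sub_zero,
      LinearMap.add_apply, LinearMap.smul_apply, LinearMap.zero_apply, LinearMap.map_smul,
      smul_eq_mul, hHH, hγγ, hHγ, hγH, hHδ', hδ'H, hδ'γ, hγδ']
    ring
  have hg0 : g ≠ 0 := ne_of_gt hgpos
  have hden2 : g * (x * c₁ - r * y₁) ≠ 0 := mul_ne_zero hg0 hden
  have hk : (-(g^2*(x*c₁ - r*y₁)/2)*t) ≠ 0 := by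
    exact mul_ne_zero (neg_ne_zero.mpr (div_ne_zero
      (mul_ne_zero (pow_ne_zero 2 hg0) hden) two_ne_zero)) (ne_of_gt ht)
  have key : ZRe B (t • H) (s • H + u • γ)
        (mukaiVec B (0 : V) 2 (r, c₁ • H + c₂ • γ + δ', χ')) *
      ZIm B (t • H) (s • H + u • γ)
        (mukaiVec B (0 : V) 2 (x, y₁ • H + y₂ • γ + δ, z)) -
      ZRe B (t • H) (s • H + u • γ)
        (mukaiVec B (0 : V) 2 (x, y₁ • H + y₂ • γ + δ, z)) *
      ZIm B (t • H) (s • H + u • γ)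
        (mukaiVec B (0 : V) 2 (r, c₁ • H + c₂ • γ + δ', χ')) =
      (-(g^2*(x*c₁ - r*y₁)/2)*t) * ((s - C)^2 + t^2 - (C^2 + D + 2/g)) := by
    rw [hRe, hRe', hIm, hIm', hC, hD]
    have h1 : (g * (x * c₁ - r * y₁)) * (g * (x * c₁ - r * y₁))⁻¹ = 1 := mul_inv_cancel₀ (mul_ne_zero hg0 hden)
    have h2 : g * g⁻¹ = 1 := mul_inv_cancel₀ hg0
    simp only [div_eq_mul_inv]
    linear_combination (-(g*t*s*(x * χ' - r * z + u * d * (x * c₂ - r * y₂)) + g*t*(2*z*c₁ - 2*c₂*u*d*y₁ - x*u^2*d*c₁ + 2*y₂*u*d*c₁ - 2*χ'*y₁ + r*u^2*d*y₁)/2)) * h1 - (g*(x * c₁ - r * y₁)*t) * h2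
  constructor
  · intro h
    have h0 : (-(g^2*(x*c₁ - r*y₁)/2)*t) * ((s - C)^2 + t^2 - (C^2 + D + 2/g)) = 0 := by
      rw [← key, h, sub_self]
    rcases mul_eq_zero.mp h0 with h1 | h1
    · exact absurd h1 hk
    · linarith [h1]
  · intro h
    have h0 : (s - C)^2 + t^2 - (C^2 + D + 2/g) = 0 := by linarith [h]
    have := key
    rw [h0, mul_zero, sub_eq_zero] at this
    exact this
end
end
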